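/- Let q ∈ ℂ* not a root of unity and W = ⟨e, f | ef = qfe + 1⟩. The module H = ℂ[f] (with f acting by multiplication and e acting as the q-derivative determined by e·1 = 0 and the relation) is a simple W-module, and every W-module M with e acting locally nilpotently is isomorphic to a direct sum of copies of H. In particular, the category of such locally-nilpotent W-modules is semisimple. -/

import Mathlib

open Finset Polynomial

noncomputable section

/-- The `q`-integer `(n)_q = 1 + q + ⋯ + q^(n-1)`. -/
def qInt (q : ℂ) (n : ℕ) : ℂ := ∑ i ∈ Finset.range n, q ^ i

/-- The defining relation of the quantized Weyl algebra: `e f = q f e + 1`, where the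
generator `e` is `FreeAlgebra.ι ℂ true` and `f` is `FreeAlgebra.ι ℂ false`. -/
inductive WeylRel (q : ℂ) : FreeAlgebra ℂ Bool → FreeAlgebra ℂ Bool → Prop
  | rel : WeylRel q (FreeAlgebra.ι ℂ true * FreeAlgebra.ι ℂ false)
      (q • (FreeAlgebra.ι ℂ false * FreeAlgebra.ι ℂ true) + 1)

/-- The quantized Weyl algebra `W = ⟨e, f | ef = qfe + 1⟩`. -/
abbrev WeylAlg (q : ℂ) := RingQuot (WeylRel q)

/-- The generator `e` of `W`. -/
def eW (q : ℂ) : WeylAlg q := RingQuot.mkAlgHom ℂ (WeylRel q) (FreeAlgebra.ι ℂ true)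

/-- The generator `f` of `W`. -/
def fW (q : ℂ) : WeylAlg q := RingQuot.mkAlgHom ℂ (WeylRel q) (FreeAlgebra.ι ℂ false)

/-- The `q`-derivative operator on `ℂ[f]`: `fⁿ ↦ (n)_q f^(n-1)`. -/
def Eop (q : ℂ) : Module.End ℂ (Polynomial ℂ) :=
  Polynomial.lsum fun n => qInt q n • (Polynomial.monomial (n - 1) : ℂ →ₗ[ℂ] Polynomial ℂ)

/-- Multiplication by `f` on `ℂ[f]`: `fⁿ ↦ f^(n+1)`. -/
def Fop : Module.End ℂ (Polynomial ℂ) := LinearMap.mulLeft ℂ (Polynomial.X : Polynomial ℂ)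

/-- The relation `e f = q f e + 1` holds for the operators `Eop q` and `Fop`. -/
theorem EopFop_rel (q : ℂ) : Eop q * Fop = q • (Fop * Eop q) + 1 := by
  have hE : ∀ (m : ℕ) (a : ℂ), Eop q (monomial m a) = qInt q m • monomial (m - 1) a := by
    intro m a
    simp [Eop, Polynomial.sum_monomial_index]
  have hF : ∀ (m : ℕ) (a : ℂ), Fop (monomial m a) = monomial (m + 1) a := by
    intro m a
    simp [Fop, X_mul_monomial]
  apply Polynomial.lhom_ext'
  intro n
  apply LinearMap.ext_ring
  show (Eop q * Fop) (monomial n 1) = (q • (Fop * Eop q) + 1) (monomial n 1)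
  rw [Module.End.mul_apply, hF, hE]
  rw [LinearMap.add_apply, LinearMap.smul_apply, Module.End.mul_apply, hE, Module.End.one_apply]
  cases n with
  | zero => simp [qInt]
  | succ m =>
      rw [map_smul, hF]
      simp only [Nat.add_sub_cancel]
      rw [smul_smul]
      have h1 : qInt q (m + 1 + 1) = q * qInt q (m + 1) + 1 := by
        rw [qInt, qInt, Finset.sum_range_succ', Finset.mul_sum]
        simp [pow_succ, mul_comm, add_comm]
      rw [h1, add_smul, one_smul]

/-- The representation of `W` on `ℂ[f]` with `f` acting by multiplication and `e` by the
`q`-derivative. -/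
def weylRep (q : ℂ) : WeylAlg q →ₐ[ℂ] Module.End ℂ (Polynomial ℂ) :=
  RingQuot.liftAlgHom ℂ
    ⟨FreeAlgebra.lift ℂ (fun b => if b then Eop q else Fop), by
      rintro a b ⟨⟩
      simp only [map_add, map_mul, map_smul, map_one, FreeAlgebra.lift_ι_apply, if_pos, if_neg]
      exact EopFop_rel q⟩

/-- The module structure on `H = ℂ[f]` over `W`, with `f·fⁿ = f^(n+1)` and
`e·fⁿ = (n)_q f^(n-1)`. -/
instance weylModule (q : ℂ) : Module (WeylAlg q) (Polynomial ℂ) :=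
  Module.compHom _ (weylRep q).toRingHom
section Aux
variable (q : ℂ)

lemma Eop_monomial (m : ℕ) (a : ℂ) :
    Eop q (monomial m a) = qInt q m • monomial (m - 1) a := by
  simp [Eop, Polynomial.sum_monomial_index]

lemma Fop_monomial (m : ℕ) (a : ℂ) : Fop (monomial m a) = monomial (m + 1) a := by
  simp [Fop, X_mul_monomial]

lemma weylRep_e : weylRep q (eW q) = Eop q := by
  rw [eW, weylRep, RingQuot.liftAlgHom_mkAlgHom_apply]
  simp

lemma weylRep_f : weylRep q (fW q) = Fop := by
  rw [fW, weylRep, RingQuot.liftAlgHom_mkAlgHom_apply]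
  simp

lemma smul_poly_def (w : WeylAlg q) (p : Polynomial ℂ) : w • p = weylRep q w p := rfl

lemma eW_smul (p : Polynomial ℂ) : eW q • p = Eop q p := by
  rw [smul_poly_def, weylRep_e]

lemma fW_smul (p : Polynomial ℂ) : fW q • p = Fop p := by
  rw [smul_poly_def, weylRep_f]

lemma Eop_coeff (p : Polynomial ℂ) (n : ℕ) :
    (Eop q p).coeff n = qInt q (n + 1) * p.coeff (n + 1) := by
  induction p using Polynomial.induction_on' with
  | add p r hp hr => simp [hp, hr, mul_add]
  | monomial m a =>
      rw [Eop_monomial]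
      rcases m with _ | m
      · simp [qInt]
      · simp only [Nat.add_sub_cancel, Polynomial.coeff_smul, Polynomial.coeff_monomial,
          smul_eq_mul]
        by_cases h : m = n
        · subst h; simp
        · rw [if_neg h, if_neg (by omega), mul_zero, mul_zero]

def qShift (q : ℂ) (n k : ℕ) : ℂ := ∏ j ∈ Finset.range k, qInt q (n + j + 1)

lemma Eop_pow_coeff (k : ℕ) (p : Polynomial ℂ) (n : ℕ) :
    ((Eop q ^ k) p).coeff n = qShift q n k * p.coeff (n + k) := by
  induction k generalizing p with
  | zero => simp [qShift]
  | succ k ih =>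
      rw [pow_succ, Module.End.mul_apply, ih, Eop_coeff]
      simp only [qShift, Finset.prod_range_succ, show n + (k + 1) = n + k + 1 from rfl]
      ring

end Aux
section Aux2
variable {q : ℂ}

lemma qInt_ne_zero (hq : ∀ n : ℕ, 0 < n → q ^ n ≠ 1) (n : ℕ) (hn : 0 < n) : qInt q n ≠ 0 := by
  have hq1 : q ≠ 1 := by
    intro h
    exact hq 1 one_pos (by simp [h])
  rw [qInt, geom_sum_eq hq1]
  intro h
  have := sub_ne_zero.mpr hq1
  have h2 : q ^ n - 1 = 0 := by
    field_simp at h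
    rw [mul_zero] at h; exact h
  exact hq n hn (by have := sub_eq_zero.mp h2; simpa using this)

lemma qShift_ne_zero (hq : ∀ n : ℕ, 0 < n → q ^ n ≠ 1) (n k : ℕ) : qShift q n k ≠ 0 := by
  rw [qShift]
  exact Finset.prod_ne_zero_iff.mpr fun j _ => qInt_ne_zero hq _ (by omega)

end Aux2

section WRel
variable (q : ℂ)

lemma efW_rel : eW q * fW q = q • (fW q * eW q) + 1 := by
  rw [eW, fW, ← map_mul]
  rw [RingQuot.mkAlgHom_rel ℂ (WeylRel.rel (q := q))]
  simp [map_add, map_smul, map_mul]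

lemma e_fpow (n : ℕ) :
    eW q * (fW q) ^ n = q ^ n • ((fW q) ^ n * eW q) + qInt q n • (fW q) ^ (n - 1) := by
  induction n with
  | zero => simp [qInt]
  | succ n ih =>
      have h1 : qInt q (n + 1) = qInt q n + q ^ n := by
        simp [qInt, Finset.sum_range_succ]
      rw [pow_succ, ← mul_assoc, ih, add_mul, smul_mul_assoc, smul_mul_assoc, mul_assoc,
        efW_rel, Nat.add_sub_cancel]
      rw [mul_add, mul_one, mul_smul_comm, ← mul_assoc, ← pow_succ, smul_add, smul_smul]
      rcases n with _ | m
      · simp [qInt, pow_succ]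
      · rw [Nat.add_sub_cancel, ← pow_succ, h1]
        rw [show fW q ^ m * fW q = fW q ^ (m + 1) from (pow_succ _ m).symm]
        module
end WRel

section Sigma
variable (q : ℂ)

/-- The embedding `ℂ[X] → W`, `X ↦ f`. -/
def σW : Polynomial ℂ →ₐ[ℂ] WeylAlg q := aeval (fW q)

/-- The scaling operator `fⁿ ↦ qⁿ fⁿ`. -/
def Qop : Module.End ℂ (Polynomial ℂ) :=
  Polynomial.lsum fun n => q ^ n • (Polynomial.monomial n : ℂ →ₗ[ℂ] Polynomial ℂ)

lemma Qop_monomial (m : ℕ) (a : ℂ) : Qop q (monomial m a) = q ^ m • monomial m a := by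
  simp [Qop, Polynomial.sum_monomial_index]

lemma σW_monomial (m : ℕ) (a : ℂ) : σW q (monomial m a) = a • (fW q) ^ m := by
  simp [σW, ← Polynomial.smul_X_eq_monomial, Algebra.smul_def]

lemma e_mul_σW (p : Polynomial ℂ) :
    eW q * σW q p = σW q (Eop q p) + σW q (Qop q p) * eW q := by
  induction p using Polynomial.induction_on' with
  | add p r hp hr => simp only [map_add, mul_add, add_mul, hp, hr]; abel
  | monomial m a =>
      rw [σW_monomial, Eop_monomial, Qop_monomial, map_smul, map_smul, σW_monomial,
        σW_monomial, mul_smul_comm, e_fpow, smul_add, smul_mul_assoc, smul_mul_assoc]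
      module

lemma eW_pow_smul (k : ℕ) (p : Polynomial ℂ) : (eW q ^ k) • p = (Eop q ^ k) p := by
  rw [smul_poly_def, map_pow, weylRep_e]

lemma Fop_pow (m : ℕ) (p : Polynomial ℂ) : (Fop ^ m) p = X ^ m * p := by
  induction m generalizing p with
  | zero => simp
  | succ m ih => rw [pow_succ, Module.End.mul_apply, show Fop p = X * p from rfl, ih,
      pow_succ]; ring

lemma σW_smul_one (r : Polynomial ℂ) : σW q r • (1 : Polynomial ℂ) = r := by
  rw [smul_poly_def, σW, ← Polynomial.aeval_algHom_apply, weylRep_f]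
  induction r using Polynomial.induction_on' with
  | add p s hp hs => simp [hp, hs]
  | monomial m a =>
      rw [← Polynomial.smul_X_eq_monomial, map_smul, map_pow, aeval_X, LinearMap.smul_apply,
        Fop_pow, mul_one, Polynomial.smul_X_eq_monomial]

end Sigma

section Simple
variable (q : ℂ)

lemma algC_smul (a : ℂ) (p : Polynomial ℂ) :
    (algebraMap ℂ (WeylAlg q) a) • p = a • p := by
  rw [smul_poly_def, AlgHom.commutes, Module.algebraMap_end_apply]

lemma Eop_pow_natDegree (p : Polynomial ℂ) :
    (Eop q ^ p.natDegree) p = C (qShift q 0 p.natDegree * p.coeff p.natDegree) := by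
  ext k
  rw [Eop_pow_coeff, coeff_C]
  rcases k with _ | k
  · simp
  · rw [if_neg (by omega)]
    rw [Polynomial.coeff_eq_zero_of_natDegree_lt (by omega), mul_zero]

theorem simpleH (hq : ∀ n : ℕ, 0 < n → q ^ n ≠ 1) :
    IsSimpleModule (WeylAlg q) (Polynomial ℂ) := by
  haveI : Nontrivial (Submodule (WeylAlg q) (Polynomial ℂ)) := by
    refine ⟨⊥, ⊤, fun h => ?_⟩
    have h1 : (1 : Polynomial ℂ) ∈ (⊥ : Submodule (WeylAlg q) (Polynomial ℂ)) := by
      rw [h]; trivial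
    simpa using h1
  refine { toIsSimpleOrder := ⟨fun S => or_iff_not_imp_left.mpr fun hS => ?_⟩ }
  obtain ⟨p, hpS, hp⟩ := Submodule.exists_mem_ne_zero_of_ne_bot hS
  set n := p.natDegree with hn
  set c := qShift q 0 n * p.coeff n with hc
  have hcne : c ≠ 0 :=
    mul_ne_zero (qShift_ne_zero hq 0 n) (by simpa [hn] using mt leadingCoeff_eq_zero.mp hp)
  have hCc : C c ∈ S := by
    have h2 := S.smul_mem (eW q ^ n) hpS
    rwa [eW_pow_smul, hn, Eop_pow_natDegree] at h2
  have h1 : (1 : Polynomial ℂ) ∈ S := by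
    have h3 := S.smul_mem (algebraMap ℂ (WeylAlg q) c⁻¹) hCc
    rwa [algC_smul, Polynomial.smul_C, smul_eq_mul, inv_mul_cancel₀ hcne, map_one] at h3
  rw [Submodule.eq_top_iff']
  intro r
  have := S.smul_mem (σW q r) h1
  rwa [σW_smul_one] at this

end Simple

section HInst
variable (q : ℂ)

instance : IsScalarTower ℂ (WeylAlg q) (Polynomial ℂ) :=
  ⟨fun c w p => by
    rw [smul_poly_def, smul_poly_def, map_smul, LinearMap.smul_apply]⟩

instance : SMulCommClass (WeylAlg q) ℂ (Polynomial ℂ) :=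
  ⟨fun w c p => by
    rw [smul_poly_def, smul_poly_def, map_smul]⟩

end HInst

section LocNil
variable (q : ℂ) {M : Type} [AddCommGroup M] [Module (WeylAlg q) M] [Module ℂ M]
  [IsScalarTower ℂ (WeylAlg q) M] [SMulCommClass (WeylAlg q) ℂ M]
  {ι : Type} (v : ι → M)

/-- The map `⊕ᵢ H → M`, `(i, p) ↦ p(f) • v i`. -/
def ψaux : (ι →₀ Polynomial ℂ) →ₗ[ℂ] M :=
  Finsupp.lsum ℂ fun i =>
    { toFun := fun p => σW q p • v i
      map_add' := fun p r => by rw [map_add, add_smul]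
      map_smul' := fun c p => by rw [map_smul, RingHom.id_apply, smul_assoc] }

lemma ψaux_single (i : ι) (p : Polynomial ℂ) :
    ψaux q v (Finsupp.single i p) = σW q p • v i := by
  rw [ψaux, Finsupp.lsum_single, LinearMap.coe_mk, AddHom.coe_mk]

lemma ψaux_e (hv : ∀ i, eW q • v i = 0) (x : ι →₀ Polynomial ℂ) :
    ψaux q v (eW q • x) = eW q • ψaux q v x := by
  induction x using Finsupp.induction_linear with
  | zero => simp
  | add a b ha hb => rw [smul_add, map_add, ha, hb, map_add, smul_add]
  | single i p =>
      rw [Finsupp.smul_single, ψaux_single, ψaux_single, eW_smul, ← mul_smul, e_mul_σW,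
        add_smul, mul_smul, hv i, smul_zero, add_zero]

lemma ψaux_f (x : ι →₀ Polynomial ℂ) :
    ψaux q v (fW q • x) = fW q • ψaux q v x := by
  induction x using Finsupp.induction_linear with
  | zero => simp
  | add a b ha hb => rw [smul_add, map_add, ha, hb, map_add, smul_add]
  | single i p =>
      rw [Finsupp.smul_single, ψaux_single, ψaux_single, fW_smul, ← mul_smul]
      congr 1
      show σW q (X * p) = fW q * σW q p
      rw [map_mul, σW, aeval_X]

lemma ψaux_wsmul (hv : ∀ i, eW q • v i = 0) (w : WeylAlg q) (x : ι →₀ Polynomial ℂ) :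
    ψaux q v (w • x) = w • ψaux q v x := by
  obtain ⟨a, rfl⟩ := RingQuot.mkAlgHom_surjective ℂ (WeylRel q) w
  induction a generalizing x with
  | grade0 c =>
      rw [AlgHom.commutes]
      have h1 : (algebraMap ℂ (WeylAlg q) c) • x = c • x := algebraMap_smul _ c x
      have h2 : (algebraMap ℂ (WeylAlg q) c) • ψaux q v x = c • ψaux q v x :=
        algebraMap_smul _ c _
      rw [h1, h2, map_smul]
  | grade1 b =>
      cases b
      · exact ψaux_f q v x
      · exact ψaux_e q v hv x
  | mul a b ha hb => rw [map_mul, mul_smul, ha, hb, mul_smul]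
  | add a b ha hb => rw [map_add, add_smul, map_add, ha, hb, add_smul]

end LocNil

section Seq

/-- Coefficients of the `q`-analogue of `∑ (-1)^k f^k e^k / k!`. -/
def cseq (q : ℂ) : ℕ → ℂ
  | 0 => 1
  | k + 1 => -(q ^ k * cseq q k) / qInt q (k + 1)

lemma cseq_rel {q : ℂ} (hq : ∀ n : ℕ, 0 < n → q ^ n ≠ 1) (k : ℕ) :
    cseq q (k + 1) * qInt q (k + 1) = -(cseq q k * q ^ k) := by
  have h := qInt_ne_zero hq (k + 1) (by omega)
  rw [cseq, div_mul_cancel₀ _ h]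
  ring

end Seq

section Surj
variable {q : ℂ} {M : Type} [AddCommGroup M] [Module (WeylAlg q) M] [Module ℂ M]
  [IsScalarTower ℂ (WeylAlg q) M] [SMulCommClass (WeylAlg q) ℂ M]

lemma e_smul_sum (hq : ∀ n : ℕ, 0 < n → q ^ n ≠ 1) (l : ℕ) (m : M) :
    eW q • (∑ k ∈ Finset.range (l + 1), cseq q k • ((fW q ^ k * eW q ^ k) • m)) =
      (cseq q l * q ^ l) • ((fW q ^ l * eW q ^ (l + 1)) • m) := by
  have hterm : ∀ k, eW q • (cseq q k • ((fW q ^ k * eW q ^ k) • m)) =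
      (cseq q k * q ^ k) • ((fW q ^ k * eW q ^ (k + 1)) • m) +
        (cseq q k * qInt q k) • ((fW q ^ (k - 1) * eW q ^ k) • m) := by
    intro k
    rw [smul_comm, ← mul_smul, ← mul_assoc, e_fpow, add_mul, smul_mul_assoc, smul_mul_assoc,
      add_smul, mul_assoc]
    rw [show eW q * eW q ^ k = eW q ^ (k + 1) from (pow_succ' _ _).symm]
    rw [smul_assoc, smul_assoc, smul_add, smul_smul, smul_smul]
  rw [Finset.smul_sum]
  simp only [hterm]
  rw [Finset.sum_add_distrib]
  have hB : ∑ k ∈ Finset.range (l + 1),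
      (cseq q k * qInt q k) • ((fW q ^ (k - 1) * eW q ^ k) • m) =
      -∑ k ∈ Finset.range l, (cseq q k * q ^ k) • ((fW q ^ k * eW q ^ (k + 1)) • m) := by
    rw [Finset.sum_range_succ']
    have h0 : (cseq q 0 * qInt q 0) • ((fW q ^ (0 - 1) * eW q ^ 0) • m) = 0 := by
      simp [qInt]
    rw [h0, add_zero, ← Finset.sum_neg_distrib]
    refine Finset.sum_congr rfl fun k _ => ?_
    rw [Nat.add_sub_cancel, cseq_rel hq k, neg_smul]
  rw [hB, Finset.sum_range_succ]
  abel

end Surj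

section Surj2
variable {q : ℂ} {M : Type} [AddCommGroup M] [Module (WeylAlg q) M] [Module ℂ M]
  [IsScalarTower ℂ (WeylAlg q) M] [SMulCommClass (WeylAlg q) ℂ M]

lemma mem_span_ker (hq : ∀ n : ℕ, 0 < n → q ^ n ≠ 1) :
    ∀ (l : ℕ) (m : M), (eW q ^ l) • m = 0 →
      m ∈ Submodule.span (WeylAlg q) {x : M | eW q • x = 0} := by
  intro l
  induction l with
  | zero =>
      intro m hm
      rw [pow_zero, one_smul] at hm
      rw [hm]
      exact zero_mem _
  | succ l ih =>
      intro m hm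
      set N := Submodule.span (WeylAlg q) {x : M | eW q • x = 0} with hN
      have hs : (∑ k ∈ Finset.range (l + 1), cseq q k • ((fW q ^ k * eW q ^ k) • m)) ∈ N := by
        apply Submodule.subset_span
        show eW q • _ = 0
        rw [e_smul_sum hq l m, mul_smul (fW q ^ l) (eW q ^ (l + 1)) m, hm, smul_zero, smul_zero]
      have hterm : ∀ k ∈ Finset.range l,
          cseq q (k + 1) • ((fW q ^ (k + 1) * eW q ^ (k + 1)) • m) ∈ N := by
        intro k _
        have h1 : (eW q ^ l) • ((eW q ^ (k + 1)) • m) = 0 := by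
          rw [← mul_smul, ← pow_add, show l + (k + 1) = k + (l + 1) by omega, pow_add,
            mul_smul, hm, smul_zero]
        have h2 := N.smul_mem (fW q ^ (k + 1)) (ih _ h1)
        rw [← mul_smul] at h2
        have h3 := N.smul_mem (algebraMap ℂ (WeylAlg q) (cseq q (k + 1))) h2
        rwa [algebraMap_smul] at h3
      have h0 : cseq q 0 • ((fW q ^ 0 * eW q ^ 0) • m) = m := by
        simp [cseq]
      have hm0 : m = (∑ k ∈ Finset.range (l + 1), cseq q k • ((fW q ^ k * eW q ^ k) • m)) -
          ∑ k ∈ Finset.range l, cseq q (k + 1) • ((fW q ^ (k + 1) * eW q ^ (k + 1)) • m) := by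
        rw [Finset.sum_range_succ', h0]
        abel
      rw [hm0]
      exact Submodule.sub_mem N hs (Submodule.sum_mem N hterm)

end Surj2

section Inj
variable (q : ℂ) {M : Type} [AddCommGroup M] [Module (WeylAlg q) M] [Module ℂ M]
  [IsScalarTower ℂ (WeylAlg q) M] [SMulCommClass (WeylAlg q) ℂ M]
  {ι : Type} (v : ι → M)

lemma ψaux_C (z : ι →₀ ℂ) :
    ψaux q v (Finsupp.mapRange (Polynomial.C : ℂ → Polynomial ℂ) (map_zero _) z) =
      Finsupp.linearCombination ℂ v z := by
  rw [ψaux, Finsupp.lsum_apply, Finsupp.sum_mapRange_index (by simp)]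
  rw [Finsupp.linearCombination_apply]
  refine Finsupp.sum_congr fun i _ => ?_
  show σW q (C (z i)) • v i = z i • v i
  rw [σW, aeval_C, algebraMap_smul]

lemma inj_aux (hq : ∀ n : ℕ, 0 < n → q ^ n ≠ 1) (hv : ∀ i, eW q • v i = 0)
    (hli : LinearIndependent ℂ v) :
    ∀ (Nb : ℕ) (x : ι →₀ Polynomial ℂ), (∀ i n, Nb ≤ n → (x i).coeff n = 0) →
      ψaux q v x = 0 → x = 0 := by
  intro Nb
  induction Nb with
  | zero =>
      intro x hb _
      ext i n
      simpa using hb i n (Nat.zero_le n)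
  | succ Nb ih =>
      intro x hb hx
      have hy : ψaux q v ((eW q ^ Nb) • x) = 0 := by
        rw [ψaux_wsmul q v hv, hx, smul_zero]
      have hyi : ∀ i, ((eW q ^ Nb) • x) i = C (qShift q 0 Nb * (x i).coeff Nb) := by
        intro i
        rw [Finsupp.smul_apply, eW_pow_smul]
        ext k
        rw [Eop_pow_coeff, coeff_C]
        rcases k with _ | k
        · simp
        · rw [if_neg (by omega), hb i (k + 1 + Nb) (by omega), mul_zero]
      set z : ι →₀ ℂ := ((eW q ^ Nb) • x).mapRange (fun p => p.coeff 0) (Polynomial.coeff_zero 0) with hz'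
      have hyz : (eW q ^ Nb) • x = Finsupp.mapRange (Polynomial.C : ℂ → Polynomial ℂ)
          (map_zero _) z := by
        ext i
        rw [Finsupp.mapRange_apply, hz', Finsupp.mapRange_apply, hyi i, coeff_C_zero]
      rw [hyz, ψaux_C] at hy
      have hz : z = 0 := linearIndependent_iff.mp hli z hy
      have hcoeff : ∀ i, (x i).coeff Nb = 0 := by
        intro i
        have h4 : z i = 0 := by rw [hz]; rfl
        rw [hz', Finsupp.mapRange_apply, hyi i, coeff_C_zero] at h4
        exact (mul_eq_zero.mp h4).resolve_left (qShift_ne_zero hq 0 Nb)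
      refine ih x (fun i n hn => ?_) hx
      rcases Nat.eq_or_lt_of_le hn with h | h
      · rw [← h]; exact hcoeff i
      · exact hb i n h

end Inj

/-- Let `q ∈ ℂ*` not be a root of unity and `W = ⟨e, f | ef = qfe + 1⟩`. The module
`H = ℂ[f]` (with `f` acting by multiplication and `e` as the `q`-derivative) is a simple
`W`-module, and every `W`-module `M` on which `e` acts locally nilpotently is isomorphic
to a direct sum of copies of `H`. In particular the category of such locally nilpotent
`W`-modules is semisimple. -/
theorem stmt16 (q : ℂ) (hq0 : q ≠ 0) (hq : ∀ n : ℕ, 0 < n → q ^ n ≠ 1) :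
    IsSimpleModule (WeylAlg q) (Polynomial ℂ) ∧
      ∀ (M : Type) [AddCommGroup M] [Module (WeylAlg q) M],
        (∀ m : M, ∃ l : ℕ, ((eW q) ^ l) • m = 0) →
        ∃ ι : Type, Nonempty (M ≃ₗ[WeylAlg q] (ι →₀ Polynomial ℂ)) := by
  refine ⟨simpleH q hq, ?_⟩
  intro M _ _ hM
  letI : Module ℂ M := Module.compHom M (algebraMap ℂ (WeylAlg q))
  haveI : IsScalarTower ℂ (WeylAlg q) M := ⟨fun c w m => by
    show (c • w) • m = (algebraMap ℂ (WeylAlg q) c) • (w • m)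
    rw [Algebra.smul_def, mul_smul]⟩
  haveI : SMulCommClass (WeylAlg q) ℂ M := ⟨fun w c m => by
    show w • (algebraMap ℂ (WeylAlg q) c) • m = (algebraMap ℂ (WeylAlg q) c) • (w • m)
    rw [← mul_smul, ← Algebra.commutes, mul_smul]⟩
  set Kc : Submodule ℂ M :=
    { carrier := {x | eW q • x = 0}
      add_mem' := fun {a b} ha hb => by
        show eW q • (a + b) = 0
        rw [smul_add, ha, hb, add_zero]
      zero_mem' := smul_zero _
      smul_mem' := fun c x hx => by
        show eW q • (c • x) = 0
        rw [smul_comm, hx, smul_zero] } with hKc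
  let bb := Module.Basis.ofVectorSpace ℂ Kc
  refine ⟨Module.Basis.ofVectorSpaceIndex ℂ Kc, ?_⟩
  set v : Module.Basis.ofVectorSpaceIndex ℂ Kc → M := fun i => ((bb i : Kc) : M) with hvdef
  have hv : ∀ i, eW q • v i = 0 := fun i => (bb i).2
  have hli : LinearIndependent ℂ v :=
    (bb.linearIndependent).map' Kc.subtype (Submodule.ker_subtype Kc)
  let Ψ : ((Module.Basis.ofVectorSpaceIndex ℂ Kc) →₀ Polynomial ℂ) →ₗ[WeylAlg q] M :=
    { toFun := ψaux q v
      map_add' := (ψaux q v).map_add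
      map_smul' := fun w x => ψaux_wsmul q v hv w x }
  have hinj : Function.Injective Ψ := by
    rw [← LinearMap.ker_eq_bot, Submodule.eq_bot_iff]
    intro x hx
    refine inj_aux q v hq hv hli ((x.support.sup fun i => (x i).natDegree) + 1) x
      (fun i n hn => ?_) hx
    by_cases hi : i ∈ x.support
    · refine Polynomial.coeff_eq_zero_of_natDegree_lt ?_
      have h6 := Finset.le_sup (f := fun i => (x i).natDegree) hi
      omega
    · rw [Finsupp.notMem_support_iff.mp hi, Polynomial.coeff_zero]
  have hsurj : Function.Surjective Ψ := by
    rw [← LinearMap.range_eq_top, Submodule.eq_top_iff']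
    intro m
    obtain ⟨l, hl⟩ := hM m
    have hmem := mem_span_ker hq l m hl
    have h2 : Kc ≤ Submodule.span ℂ (Set.range v) := by
      intro x hx
      have h3 : (⟨x, hx⟩ : Kc) ∈ Submodule.span ℂ (Set.range bb) := by
        rw [Module.Basis.span_eq]; trivial
      have h4 := Submodule.mem_map_of_mem (f := Kc.subtype) h3
      rw [Submodule.map_span, ← Set.range_comp] at h4
      exact h4
    have h1 : Submodule.span ℂ (Set.range v) ≤
        Submodule.restrictScalars ℂ (LinearMap.range Ψ) := by
      rw [Submodule.span_le]
      rintro _ ⟨i, rfl⟩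
      refine ⟨Finsupp.single i 1, ?_⟩
      show ψaux q v (Finsupp.single i 1) = v i
      rw [ψaux_single, map_one, one_smul]
    have h5 : Submodule.span (WeylAlg q) {x : M | eW q • x = 0} ≤ LinearMap.range Ψ := by
      rw [Submodule.span_le]
      intro x hx
      exact h1 (h2 hx)
    exact h5 hmem
  exact ⟨(LinearEquiv.ofBijective Ψ ⟨hinj, hsurj⟩).symm⟩
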